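/- Let N ≥ 1 and assume h : ℝ^N × ℝ² → ℝ is continuous with h(x, b, a) − h(x, a, b) ≥ f(a − b) for all a ≥ b and all x, where f : ℝ → [0,∞) is convex, f(t) = 0 for t ≤ 0, and f(t) ≥ ε t^η for t ≥ 0 with constants ε > 0, η > 1. If (u, v) is a bounded classical solution of −Δu = h(x,u,v), −Δv = h(x,v,u) on ℝ^N, then u = v. -/

import Mathlib

open Real Filter Topology
lemma second_deriv_nonpos_at_max {g : ℝ → ℝ} (hg : ContDiff ℝ 2 g)
    (hmax : ∀ t, g t ≤ g 0) : deriv (deriv g) 0 ≤ 0 := by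
  by_contra hcon
  push_neg at hcon
  have hg' : ContDiff ℝ 1 (deriv g) := (contDiff_succ_iff_deriv.mp (by norm_num at hg ⊢; exact hg)).2.2
  have hd0 : deriv g 0 = 0 :=
    IsLocalMax.deriv_eq_zero (Filter.Eventually.of_forall hmax)
  have hdd : HasDerivAt (deriv g) (deriv (deriv g) 0) 0 :=
    ((hg'.differentiable one_ne_zero) 0).hasDerivAt
  have hslope : Tendsto (slope (deriv g) 0) (𝓝[≠] (0:ℝ)) (𝓝 (deriv (deriv g) 0)) :=
    hasDerivAt_iff_tendsto_slope.mp hdd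
  have hslope' : Tendsto (slope (deriv g) 0) (𝓝[>] (0:ℝ)) (𝓝 (deriv (deriv g) 0)) :=
    hslope.mono_left (nhdsWithin_mono _ (fun t ht => ne_of_gt ht))
  have hev : ∀ᶠ t in 𝓝[>] (0:ℝ), 0 < slope (deriv g) 0 t :=
    hslope'.eventually (eventually_gt_nhds hcon)
  have hev2 : ∀ᶠ t in 𝓝[>] (0:ℝ), 0 < deriv g t := by
    filter_upwards [hev, self_mem_nhdsWithin] with t ht ht'
    have : slope (deriv g) 0 t = deriv g t / t := by
      simp [slope, hd0, div_eq_inv_mul]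
    rw [this] at ht
    have ht'' : (0:ℝ) < t := ht'
    have := mul_pos ht ht''
    rwa [div_mul_cancel₀ _ (ne_of_gt ht'')] at this
  obtain ⟨u, hu, hIoo⟩ := mem_nhdsGT_iff_exists_Ioo_subset.mp hev2
  have hu0 : (0:ℝ) < u := hu
  have hmono : StrictMonoOn g (Set.Icc 0 (u/2)) := by
    apply strictMonoOn_of_deriv_pos (convex_Icc _ _) hg.continuous.continuousOn
    intro t ht
    rw [interior_Icc] at ht
    exact hIoo ⟨ht.1, lt_trans ht.2 (by linarith)⟩
  have : g 0 < g (u/2) :=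
    hmono (Set.left_mem_Icc.mpr (by linarith)) ⟨by linarith, le_rfl⟩ (by linarith)
  exact absurd (hmax (u/2)) (not_le.mpr this)

variable {N : ℕ}

lemma hasDerivAt_line {ψ : EuclideanSpace ℝ (Fin N) → ℝ} (hψ : ContDiff ℝ 2 ψ)
    (x e : EuclideanSpace ℝ (Fin N)) (t : ℝ) :
    HasDerivAt (fun s => ψ (x + s • e)) (fderiv ℝ ψ (x + t • e) e) t := by
  have hL : HasDerivAt (fun s : ℝ => x + s • e) e t := by
    simpa using ((hasDerivAt_id t).smul_const e).const_add x
  exact ((hψ.differentiable (by norm_num) (x + t • e)).hasFDerivAt).comp_hasDerivAt t hL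

lemma fderiv_differentiable {ψ : EuclideanSpace ℝ (Fin N) → ℝ} (hψ : ContDiff ℝ 2 ψ) :
    Differentiable ℝ (fderiv ℝ ψ) :=
  (hψ.fderiv_right (m := 1) (by norm_num)).differentiable one_ne_zero

lemma diffAt_fderiv_apply {ψ : EuclideanSpace ℝ (Fin N) → ℝ} (hψ : ContDiff ℝ 2 ψ)
    (x e : EuclideanSpace ℝ (Fin N)) :
    HasFDerivAt (fun y => fderiv ℝ ψ y e) ((fderiv ℝ (fderiv ℝ ψ) x).flip e) x := by
  have h1 : HasFDerivAt (fderiv ℝ ψ) (fderiv ℝ (fderiv ℝ ψ) x) x :=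
    (fderiv_differentiable hψ x).hasFDerivAt
  have := h1.clm_apply (hasFDerivAt_const e x)
  simpa using this

lemma fderiv_fderiv_apply {ψ : EuclideanSpace ℝ (Fin N) → ℝ} (hψ : ContDiff ℝ 2 ψ)
    (x e : EuclideanSpace ℝ (Fin N)) :
    fderiv ℝ (fun y => fderiv ℝ ψ y e) x e = fderiv ℝ (fderiv ℝ ψ) x e e := by
  rw [(diffAt_fderiv_apply hψ x e).fderiv]
  simp [ContinuousLinearMap.flip_apply]

lemma hasDerivAt_line2 {ψ : EuclideanSpace ℝ (Fin N) → ℝ} (hψ : ContDiff ℝ 2 ψ)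
    (x e : EuclideanSpace ℝ (Fin N)) :
    HasDerivAt (fun s : ℝ => fderiv ℝ ψ (x + s • e) e)
      (fderiv ℝ (fun y => fderiv ℝ ψ y e) x e) 0 := by
  have hL : HasDerivAt (fun s : ℝ => x + s • e) e 0 := by
    simpa using ((hasDerivAt_id (0:ℝ)).smul_const e).const_add x
  have h1 : HasFDerivAt (fderiv ℝ ψ) (fderiv ℝ (fderiv ℝ ψ) x) ((fun s : ℝ => x + s • e) 0) := by
    simpa using (fderiv_differentiable hψ x).hasFDerivAt
  have h2 : HasDerivAt (fun s : ℝ => fderiv ℝ ψ (x + s • e)) (fderiv ℝ (fderiv ℝ ψ) x e) 0 :=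
    h1.comp_hasDerivAt 0 hL
  have h3 := h2.clm_apply (hasDerivAt_const (0:ℝ) e)
  simp only [map_zero, add_zero] at h3
  rw [fderiv_fderiv_apply hψ x e]
  simpa using h3

noncomputable def lap {N : ℕ} (u : EuclideanSpace ℝ (Fin N) → ℝ)
    (x : EuclideanSpace ℝ (Fin N)) : ℝ :=
  ∑ i : Fin N, fderiv ℝ (fun y => fderiv ℝ u y (EuclideanSpace.single i (1:ℝ))) x
    (EuclideanSpace.single i (1:ℝ))

lemma lap_sub {u v : EuclideanSpace ℝ (Fin N) → ℝ} (hu : ContDiff ℝ 2 u) (hv : ContDiff ℝ 2 v)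
    (x : EuclideanSpace ℝ (Fin N)) :
    lap (fun y => u y - v y) x = lap u x - lap v x := by
  unfold lap
  rw [← Finset.sum_sub_distrib]
  apply Finset.sum_congr rfl
  intro i _
  set e := EuclideanSpace.single i (1:ℝ)
  have h1 : (fun y => fderiv ℝ (fun z => u z - v z) y e)
      = fun y => fderiv ℝ u y e - fderiv ℝ v y e := by
    funext y
    rw [fderiv_fun_sub (hu.differentiable (by norm_num) y) (hv.differentiable (by norm_num) y)]
    simp
  rw [h1, fderiv_fun_sub (diffAt_fderiv_apply hu x e).differentiableAt
    (diffAt_fderiv_apply hv x e).differentiableAt]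
  simp

lemma liouville {ψ : EuclideanSpace ℝ (Fin N) → ℝ} {ε η : ℝ} (hε : 0 < ε) (hη : 1 < η)
    (hψ : ContDiff ℝ 2 ψ) (M : ℝ) (hb : ∀ x, ψ x ≤ M)
    (hlap : ∀ x, 0 < ψ x → ε * ψ x ^ η ≤ lap ψ x) (x₀ : EuclideanSpace ℝ (Fin N)) :
    ψ x₀ ≤ 0 := by
  by_contra hs
  push_neg at hs
  set s := ψ x₀ with hs_def
  have key : ∀ δ : ℝ, 0 < δ → ε * s ^ η ≤ 2 * N * δ := by
    intro δ hδ
    set W : EuclideanSpace ℝ (Fin N) → ℝ := fun y => ψ y - δ * ‖y - x₀‖ ^ 2 with hW_def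
    have hWc : ContDiff ℝ 2 W :=
      hψ.sub (contDiff_const.mul ((contDiff_norm_sq ℝ).comp (contDiff_id.sub contDiff_const)))
    -- W attains its maximum
    have hcoc : ∀ᶠ y in Filter.cocompact _, W y ≤ W x₀ := by
      have htrans : Filter.Tendsto (fun y : EuclideanSpace ℝ (Fin N) => y - x₀)
          (Filter.cocompact _) (Filter.cocompact _) :=
        (Homeomorph.map_cocompact (Homeomorph.subRight x₀)).le
      have hnorm : Filter.Tendsto (fun y : EuclideanSpace ℝ (Fin N) => ‖y - x₀‖)
          (Filter.cocompact _) Filter.atTop :=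
        tendsto_norm_cocompact_atTop.comp htrans
      set C := Real.sqrt (max 0 (M - s) / δ) with hC
      filter_upwards [hnorm.eventually_ge_atTop C] with y hy
      have h1 : δ * C ^ 2 = max 0 (M - s) := by
        rw [hC, Real.sq_sqrt (by positivity)]
        field_simp
      have h2 : C ^ 2 ≤ ‖y - x₀‖ ^ 2 := by
        have : (0:ℝ) ≤ C := Real.sqrt_nonneg _
        nlinarith
      have h3 : M - s ≤ δ * ‖y - x₀‖ ^ 2 := by
        have := le_max_right 0 (M - s)
        nlinarith
      have := hb y
      have h5 : ‖x₀ - x₀‖ = 0 := by simp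
      simp only [hW_def, h5]
      nlinarith
    obtain ⟨x₁, hx₁⟩ := hWc.continuous.exists_forall_ge' x₀ hcoc
    have hW0 : s ≤ W x₁ := by
      have h4 : W x₀ = s := by simp [hW_def, hs_def]
      rw [← h4]
      exact hx₁ x₀
    have hψx₁ : s ≤ ψ x₁ := by
      have : (0:ℝ) ≤ δ * ‖x₁ - x₀‖ ^ 2 := by positivity
      simp only [hW_def] at hW0
      linarith
    -- per-direction second derivative bound at the max point
    have hdir : ∀ i : Fin N,
        fderiv ℝ (fun y => fderiv ℝ ψ y (EuclideanSpace.single i (1:ℝ))) x₁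
          (EuclideanSpace.single i (1:ℝ)) ≤ 2 * δ := by
      intro i
      set e := EuclideanSpace.single i (1:ℝ) with he
      have hne : ‖e‖ = 1 := by simp [he, EuclideanSpace.norm_single]
      set c := x₁ - x₀ with hc
      set b : ℝ := 2 * (inner ℝ c e : ℝ) with hb2
      set g : ℝ → ℝ := fun t => W (x₁ + t • e) with hg_def
      have hgeq : g = fun t => ψ (x₁ + t • e) - δ * (‖c‖ ^ 2 + b * t + t ^ 2) := by
        funext t
        have h5 : x₁ + t • e - x₀ = c + t • e := by rw [hc]; abel
        have h6 : ‖c + t • e‖ ^ 2 = ‖c‖ ^ 2 + b * t + t ^ 2 := by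
          rw [norm_add_sq_real, real_inner_smul_right, norm_smul, hb2]
          simp [hne]
          ring
        simp only [hg_def, hW_def, h5, h6]
      -- g is C^2
      have hline : ContDiff ℝ 2 (fun t : ℝ => x₁ + t • e) :=
        contDiff_const.add (contDiff_id.smul contDiff_const)
      have hgC2 : ContDiff ℝ 2 g := hWc.comp hline
      have hgmax : ∀ t, g t ≤ g 0 := by
        intro t
        simp only [hg_def]
        convert hx₁ (x₁ + t • e) using 2
        · rfl
        · simp
      have h2nd := second_deriv_nonpos_at_max hgC2 hgmax
      -- compute deriv (deriv g) 0
      set A : ℝ := fderiv ℝ (fun y => fderiv ℝ ψ y e) x₁ e with hA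
      have hderiv : deriv g = fun t => fderiv ℝ ψ (x₁ + t • e) e - δ * (b + 2 * t) := by
        funext t
        rw [hgeq]
        have hp := hasDerivAt_line hψ x₁ e t
        have hq : HasDerivAt (fun t : ℝ => δ * (‖c‖ ^ 2 + b * t + t ^ 2))
            (δ * (b + 2 * t)) t := by
          have : HasDerivAt (fun t : ℝ => ‖c‖ ^ 2 + b * t + t ^ 2) (b + 2 * t) t := by
            simpa using (((hasDerivAt_const t (‖c‖^2)).fun_add
              ((hasDerivAt_id t).const_mul b)).fun_add
              (by simpa using (hasDerivAt_pow 2 t)))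
          simpa using this.const_mul δ
        exact (hp.sub hq).deriv
      have hdd2 : deriv (deriv g) 0 = A - 2 * δ := by
        rw [hderiv]
        have h7 := hasDerivAt_line2 hψ x₁ e
        have h8 : HasDerivAt (fun t : ℝ => δ * (b + 2 * t)) (δ * 2) 0 := by
          have : HasDerivAt (fun t : ℝ => b + 2 * t) 2 0 := by
            simpa using (hasDerivAt_const (0:ℝ) b).fun_add ((hasDerivAt_id (0:ℝ)).const_mul 2)
          simpa using this.const_mul δ
        have := (h7.fun_sub h8).deriv
        rw [this, ← hA]
        ring
      rw [hdd2] at h2nd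
      linarith
    -- sum up
    have hlapbound : lap ψ x₁ ≤ 2 * N * δ := by
      unfold lap
      calc (∑ i : Fin N, fderiv ℝ (fun y => fderiv ℝ ψ y (EuclideanSpace.single i (1:ℝ))) x₁
            (EuclideanSpace.single i (1:ℝ)))
          ≤ ∑ _i : Fin N, 2 * δ := Finset.sum_le_sum (fun i _ => hdir i)
        _ = 2 * N * δ := by simp [Finset.sum_const]; ring
    have hψpos : (0:ℝ) < ψ x₁ := lt_of_lt_of_le hs hψx₁
    have hstep : ε * s ^ η ≤ ε * ψ x₁ ^ η := by
      apply mul_le_mul_of_nonneg_left _ (le_of_lt hε)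
      exact Real.rpow_le_rpow (le_of_lt hs) hψx₁ (by linarith)
    linarith [hlap x₁ hψpos]
  -- conclude
  have hpos : 0 < ε * s ^ η := mul_pos hε (Real.rpow_pos_of_pos hs η)
  have hN' : (0:ℝ) ≤ (N:ℝ) := Nat.cast_nonneg N
  have e2 : (0:ℝ) < 2 * N + 2 := by positivity
  have e1 := key (ε * s ^ η / (2 * N + 2)) (by positivity)
  have e4 : (ε * s ^ η) * (2 * N + 2) ≤ 2 * N * (ε * s ^ η) := by
    calc (ε * s ^ η) * (2 * N + 2)
        ≤ (2 * N * (ε * s ^ η / (2 * N + 2))) * (2 * N + 2) :=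
          mul_le_mul_of_nonneg_right e1 (le_of_lt e2)
      _ = 2 * N * (ε * s ^ η) := by field_simp
  nlinarith [hpos, e4]

theorem symmetry_keller_osserman_interaction (N : ℕ) (hN : 1 ≤ N)
    (h : EuclideanSpace ℝ (Fin N) → ℝ → ℝ → ℝ) (f : ℝ → ℝ) (ε η : ℝ)
    (hε : 0 < ε) (hη : 1 < η)
    (hf_nonneg : ∀ t, 0 ≤ f t)
    (hf_convex : ConvexOn ℝ Set.univ f)
    (hf_zero : ∀ t : ℝ, t ≤ 0 → f t = 0)
    (hf_lb : ∀ t : ℝ, 0 ≤ t → f t ≥ ε * t ^ η)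
    (hcont : Continuous fun p : EuclideanSpace ℝ (Fin N) × ℝ × ℝ => h p.1 p.2.1 p.2.2)
    (hmono : ∀ x a b, b ≤ a → h x b a - h x a b ≥ f (a - b))
    (u v : EuclideanSpace ℝ (Fin N) → ℝ)
    (hu : ContDiff ℝ 2 u) (hv : ContDiff ℝ 2 v)
    (hub : ∃ M, ∀ x, |u x| ≤ M) (hvb : ∃ M, ∀ x, |v x| ≤ M)
    (hequ : ∀ x, -lap u x = h x (u x) (v x))
    (heqv : ∀ x, -lap v x = h x (v x) (u x)) :
    u = v := by
  obtain ⟨Mu, hMu⟩ := hub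
  obtain ⟨Mv, hMv⟩ := hvb
  have main : ∀ (a b : EuclideanSpace ℝ (Fin N) → ℝ) (Ma Mb : ℝ),
      ContDiff ℝ 2 a → ContDiff ℝ 2 b → (∀ x, |a x| ≤ Ma) → (∀ x, |b x| ≤ Mb) →
      (∀ x, -lap a x = h x (a x) (b x)) → (∀ x, -lap b x = h x (b x) (a x)) →
      ∀ x, a x - b x ≤ 0 := by
    intro a b Ma Mb ha hb hba hbb heqa heqb x
    have hψ : ContDiff ℝ 2 (fun y => a y - b y) := ha.sub hb
    apply liouville hε hη hψ (Ma + Mb)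
    · intro y
      have h1 := abs_le.mp (hba y)
      have h2 := abs_le.mp (hbb y)
      linarith [h1.2, h2.1]
    · intro y hy
      have hba' : b y ≤ a y := by linarith
      have h1 : lap (fun z => a z - b z) y = lap a y - lap b y := lap_sub ha hb y
      have h2 : lap a y - lap b y = h y (b y) (a y) - h y (a y) (b y) := by
        have e1 := heqa y
        have e2 := heqb y
        linarith
      have h3 := hmono y (a y) (b y) hba'
      have h4 := hf_lb (a y - b y) (by linarith)
      rw [h1, h2]
      linarith
  funext x
  have h1 := main u v Mu Mv hu hv hMu hMv hequ heqv x
  have h2 := main v u Mv Mu hv hu hMv hMu heqv hequ x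
  linarith
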